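/- For any field F, any tuple a = (a_1, ..., a_m) in F^m with m ≥ 2, and any integer l with 0 ≤ l ≤ m - 1, the following polynomial identity holds in F[X]: V(a) · X^l = Σ_{j=1}^m (-1)^{j+l-1} a_j^l V(â_j) Π_{k≠j} (X + a_k), where V(b_1,...,b_n) = Π_{1≤i<k≤n} (b_k - b_i) is the Vandermonde determinant and â_j is the tuple a with its j-th entry removed. -/

import Mathlib

/-- The Vandermonde product `V(a) = ∏_{i<j} (a j - a i)`. -/
noncomputable def vdm {F : Type*} [CommRing F] {n : ℕ} (a : Fin n → F) : F :=
  ∏ i : Fin n, ∏ j ∈ Finset.Ioi i, (a j - a i)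

/-- The tuple `â_j` obtained from `a` by deleting its `j`-th entry. -/
def removeNth {F : Type*} {n : ℕ} (a : Fin n → F) (j : Fin n) : Fin (n - 1) → F :=
  fun i =>
    if h : (i : ℕ) < (j : ℕ) then a ⟨i, by have := j.isLt; omega⟩
    else a ⟨i + 1, by have := i.isLt; have := j.isLt; omega⟩

open Polynomial in
/-- The key matrix: column `l` is `a_j^l`, column `i < l` is `(X + a_j) a_j^i`,
column `i > l` is `(X + a_j) a_j^(i-1)`. -/
noncomputable def Bmat {F : Type*} [Field F] (n l : ℕ) (a : Fin (n + 1) → F) :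
    Matrix (Fin (n + 1)) (Fin (n + 1)) F[X] :=
  Matrix.of fun j i =>
    if (i : ℕ) = l then C (a j) ^ l
    else if (i : ℕ) < l then (X + C (a j)) * C (a j) ^ (i : ℕ)
    else (X + C (a j)) * C (a j) ^ ((i : ℕ) - 1)

theorem removeNth_eq_succAbove {F : Type*} {n : ℕ} (a : Fin (n + 1) → F) (j : Fin (n + 1)) :
    removeNth a j = a ∘ j.succAbove := by
  funext i
  simp only [removeNth, Function.comp_apply, Fin.succAbove, Fin.lt_def, Fin.coe_castSucc]
  split_ifs with h
  · congr 1
  · congr 1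

open Polynomial Matrix Finset in
theorem det_Bmat {F : Type*} [Field F] (n l : ℕ) (hl : l ≤ n) (a : Fin (n + 1) → F) :
    (Bmat n l a).det = C (vdm a) * X ^ l := by
  classical
  set L : Matrix (Fin (n + 1)) (Fin (n + 1)) F[X] := Matrix.of fun d i =>
    ((if d = i ∧ (i : ℕ) < l then X else 0) + (if d = i ∧ ¬ (i : ℕ) < l then 1 else 0))
      + (if (d : ℕ) = (i : ℕ) + 1 ∧ (i : ℕ) < l then 1 else 0) with hL
  set U : Matrix (Fin (n + 1)) (Fin (n + 1)) F[X] := Matrix.of fun d i =>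
    (if d = i then 1 else 0) + (if (d : ℕ) + 1 = (i : ℕ) ∧ l < (i : ℕ) then X else 0) with hU
  set W : Matrix (Fin (n + 1)) (Fin (n + 1)) F[X] :=
    Matrix.vandermonde (fun j => C (a j)) with hW
  have hM1 : W * L = Matrix.of (fun j (i : Fin (n + 1)) =>
      if (i : ℕ) < l then (X + C (a j)) * C (a j) ^ (i : ℕ) else C (a j) ^ (i : ℕ)) := by
    apply Matrix.ext; intro j i
    simp only [Matrix.mul_apply, hW, hL, Matrix.of_apply, Matrix.vandermonde, Matrix.of_apply]
    by_cases hi : (i : ℕ) < l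
    · have hi' : (i : ℕ) < n := lt_of_lt_of_le hi hl
      have hcond : ∀ d : Fin (n + 1),
          ((d : ℕ) = (i : ℕ) + 1) = (d = (⟨(i : ℕ) + 1, by omega⟩ : Fin (n + 1))) := by
        intro d; simp [Fin.ext_iff]
      simp only [hi, and_true, not_true_eq_false, and_false, if_false, hcond,
        mul_add, mul_ite, mul_zero, mul_one, Finset.sum_add_distrib,
        Finset.sum_ite_eq', Finset.mem_univ, if_true, Finset.sum_const_zero, add_zero]
      ring
    · simp only [hi, and_true, and_false, if_false, not_false_eq_true, if_true, zero_add,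
        add_zero, mul_add, mul_ite, mul_zero, mul_one, Finset.sum_add_distrib,
        Finset.sum_ite_eq', Finset.mem_univ, if_true]
  have hB : Bmat n l a = W * L * U := by
    rw [hM1]
    apply Matrix.ext; intro j i
    simp only [Matrix.mul_apply, Matrix.of_apply, hU, Bmat]
    by_cases hli : l < (i : ℕ)
    · have hi1 : 1 ≤ (i : ℕ) := by omega
      have hcond : ∀ k : Fin (n + 1),
          ((k : ℕ) + 1 = (i : ℕ)) = (k = (⟨(i : ℕ) - 1, by omega⟩ : Fin (n + 1))) := by
        intro k; simp only [Fin.ext_iff]; exact propext (by omega)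
      simp only [hli, and_true, hcond, mul_add, mul_ite, mul_zero, mul_one,
        Finset.sum_add_distrib, Finset.sum_ite_eq', Finset.mem_univ, if_true]
      have h1 : ¬ (i : ℕ) < l := by omega
      have h2 : ¬ (i : ℕ) = l := by omega
      simp only [h1, h2, if_false]
      have h3 : ¬ ((⟨(i : ℕ) - 1, by omega⟩ : Fin (n + 1)) : ℕ) < l := by
        simp only []; omega
      simp only [h3, if_false]
      have hpow : C (a j) * C (a j) ^ ((i : ℕ) - 1) = C (a j) ^ (i : ℕ) := by
        rw [← pow_succ']; congr 1; omega
      rw [← hpow]; ring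
    · simp only [hli, and_false, if_false, mul_add, mul_ite, mul_zero, mul_one, add_zero,
        Finset.sum_add_distrib, Finset.sum_ite_eq', Finset.mem_univ, if_true,
        Finset.sum_const_zero]
      by_cases he : (i : ℕ) = l
      · simp [he]
      · have hil : (i : ℕ) < l := by omega
        simp [he, hil]
  have hdetW : W.det = C (vdm a) := by
    rw [hW, Matrix.det_vandermonde]
    simp [vdm, map_prod, map_sub]
  have hdetL : L.det = X ^ l := by
    have ht : L.BlockTriangular OrderDual.toDual := by
      intro p q hpq
      have hlt : (p : ℕ) < (q : ℕ) := hpq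
      have h1 : ¬ p = q := by simp [Fin.ext_iff]; omega
      have h2 : ¬ (p : ℕ) = (q : ℕ) + 1 := by omega
      simp [hL, h1, h2]
    rw [Matrix.det_of_lowerTriangular L ht]
    have hdiag : ∀ i : Fin (n + 1), L i i = if (i : ℕ) < l then X else 1 := by
      intro i
      have h3 : ¬ ((i : ℕ) = (i : ℕ) + 1 ∧ (i : ℕ) < l) := by omega
      simp only [hL, Matrix.of_apply, h3, if_false, add_zero]
      by_cases h : (i : ℕ) < l <;> simp [h]
    simp_rw [hdiag]
    rw [Finset.prod_ite, Finset.prod_const, Finset.prod_const_one, mul_one]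
    congr 1
    have : Finset.filter (fun i : Fin (n + 1) => (i : ℕ) < l) Finset.univ
        = Finset.Iio (⟨l, by omega⟩ : Fin (n + 1)) := by
      ext k; simp [Fin.lt_def]
    rw [this, Fin.card_Iio]
  have hdetU : U.det = 1 := by
    have ht : U.BlockTriangular id := by
      intro p q hpq
      have hlt : (q : ℕ) < (p : ℕ) := hpq
      have h1 : ¬ p = q := by simp [Fin.ext_iff]; omega
      have h2 : ¬ (p : ℕ) + 1 = (q : ℕ) := by omega
      simp [hU, h1, h2]
    rw [Matrix.det_of_upperTriangular ht]
    have hdiag : ∀ i : Fin (n + 1), U i i = 1 := by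
      intro i
      simp [hU, Nat.succ_ne_self]
    simp [hdiag]
  rw [hB, det_mul, det_mul, hdetW, hdetL, hdetU, mul_one]

open Polynomial Matrix Finset in
theorem det_Bmat_expand {F : Type*} [Field F] (n l : ℕ) (hl : l ≤ n) (a : Fin (n + 1) → F) :
    (Bmat n l a).det = ∑ j : Fin (n + 1),
      C ((-1 : F) ^ ((j : ℕ) + l) * a j ^ l * vdm (removeNth a j)) *
        ∏ k ∈ Finset.univ.erase j, (X + C (a k)) := by
  classical
  have hlt : l < n + 1 := by omega
  rw [Matrix.det_succ_column (Bmat n l a) ⟨l, hlt⟩]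
  refine Finset.sum_congr rfl fun j _ => ?_
  have hminor : ((Bmat n l a).submatrix j.succAbove (Fin.succAbove ⟨l, hlt⟩)).det
      = C (vdm (removeNth a j)) * ∏ k ∈ Finset.univ.erase j, (X + C (a k)) := by
    have hsub : (Bmat n l a).submatrix j.succAbove (Fin.succAbove ⟨l, hlt⟩)
        = Matrix.of (fun r (c : Fin n) => (X + C (a (j.succAbove r))) *
            (Matrix.vandermonde (fun r => C (a (j.succAbove r))) r c)) := by
      apply Matrix.ext; intro r c
      simp only [Matrix.submatrix_apply, Bmat, Matrix.of_apply, Matrix.vandermonde,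
        Matrix.of_apply]
      by_cases hc : (c : ℕ) < l
      · have h1 : ((Fin.succAbove ⟨l, hlt⟩ c) : ℕ) = (c : ℕ) := by
          simp [Fin.succAbove, Fin.lt_def, hc]
        rw [h1]
        simp [hc, Nat.ne_of_lt hc]
      · have h1 : ((Fin.succAbove ⟨l, hlt⟩ c) : ℕ) = (c : ℕ) + 1 := by
          simp [Fin.succAbove, Fin.lt_def, hc]
        rw [h1]
        have h2 : ¬ ((c : ℕ) + 1 = l) := by omega
        have h3 : ¬ ((c : ℕ) + 1 < l) := by omega
        simp [h2, h3]
    rw [hsub, Matrix.det_mul_column, Matrix.det_vandermonde]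
    have hv : (∏ i : Fin n, ∏ k ∈ Finset.Ioi i,
        (C (a (j.succAbove k)) - C (a (j.succAbove i)))) = C (vdm (removeNth a j)) := by
      rw [removeNth_eq_succAbove]
      simp [vdm, map_prod, map_sub]
    have hp : (∏ r : Fin n, (X + C (a (j.succAbove r))))
        = ∏ k ∈ Finset.univ.erase j, (X + C (a k)) := by
      have himg : Finset.univ.erase j = Finset.image j.succAbove Finset.univ := by
        ext k
        simp only [Finset.mem_erase, Finset.mem_univ, and_true, Finset.mem_image, true_and]
        constructor
        · intro h; exact Fin.exists_succAbove_eq h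
        · rintro ⟨r, rfl⟩; exact Fin.succAbove_ne j r
      rw [himg, Finset.prod_image (fun x _ y _ h => j.succAbove_right_injective h)]
    rw [hv, hp, mul_comm]
  rw [hminor]
  have hBl : Bmat n l a j ⟨l, hlt⟩ = C (a j) ^ l := by simp [Bmat]
  rw [hBl]
  simp only [_root_.map_mul, map_pow, _root_.map_neg, _root_.map_one]
  ring

open Polynomial in
/-- `V(a) X^l = ∑_j (-1)^{j+l-1} a_j^l V(â_j) ∏_{k≠j} (X + a_k)`
(indices `j` here are 0-based, so the sign is `(-1)^(j + l)`). -/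
theorem stmt0 {F : Type*} [Field F] (m : ℕ) (hm : 2 ≤ m) (a : Fin m → F)
    (l : ℕ) (hl : l ≤ m - 1) :
    C (vdm a) * X ^ l =
      ∑ j : Fin m,
        C ((-1 : F) ^ (j.val + l) * a j ^ l * vdm (removeNth a j)) *
          ∏ k ∈ Finset.univ.erase j, (X + C (a k)) := by
  obtain ⟨n, rfl⟩ : ∃ n, m = n + 1 := ⟨m - 1, by omega⟩
  have hl' : l ≤ n := by omega
  rw [← det_Bmat n l hl' a, det_Bmat_expand n l hl' a]
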